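/- Fix real numbers λ, λᵢ and L > 0 with λᵢ² < λ². Suppose f, f̃ : [0, L] → ℝ are continuously differentiable, satisfy f' + λᵢ f = λ f̃ and -f̃' + λᵢ f̃ = λ f on [0, L], f(0) + f̃(0) = 0, f(L) + f̃(L) = 0, and f + f̃ is not identically zero. Then there exists a nonzero integer n such that λᵢ² - λ² = -n²π²/L². -/

import Mathlib

open Set

lemma aux_const_of_deriv_zero {F : ℝ → ℝ} {L : ℝ}
    (h : ∀ x ∈ Icc (0 : ℝ) L, HasDerivWithinAt F 0 (Icc (0 : ℝ) L) x) :
    ∀ x ∈ Icc (0 : ℝ) L, F x = F 0 := by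
  apply constant_of_has_deriv_right_zero (fun x hx => (h x hx).continuousWithinAt)
  intro x hx
  exact (h x (mem_Icc_of_Ico hx)).mono_of_mem_nhdsWithin (Icc_mem_nhdsGE_of_mem hx)

/-- On `[0, L]`, suppose `f' + λᵢ f = λ f̃`, `-f̃' + λᵢ f̃ = λ f`, with boundary conditions
`f(0) + f̃(0) = 0`, `f(L) + f̃(L) = 0`, `λᵢ² < λ²`, and `f + f̃` not identically zero.
Then `λᵢ² - λ² = -n²π²/L²` for some nonzero integer `n`. -/
theorem cylinder_eigenvalue_quantization (lam lami L : ℝ) (hL : 0 < L)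
    (hsq : lami ^ 2 < lam ^ 2) (f ft : ℝ → ℝ)
    (hf : ∀ x ∈ Icc (0 : ℝ) L,
      HasDerivWithinAt f (lam * ft x - lami * f x) (Icc (0 : ℝ) L) x)
    (hft : ∀ x ∈ Icc (0 : ℝ) L,
      HasDerivWithinAt ft (lami * ft x - lam * f x) (Icc (0 : ℝ) L) x)
    (hb0 : f 0 + ft 0 = 0) (hbL : f L + ft L = 0)
    (hne : ¬ ∀ x ∈ Icc (0 : ℝ) L, f x + ft x = 0) :
    ∃ n : ℤ, n ≠ 0 ∧ lami ^ 2 - lam ^ 2 = -((n : ℝ) ^ 2 * Real.pi ^ 2 / L ^ 2) := by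
  set μ : ℝ := Real.sqrt (lam ^ 2 - lami ^ 2) with hμdef
  have hμsq : μ ^ 2 = lam ^ 2 - lami ^ 2 := Real.sq_sqrt (by linarith)
  have hμpos : 0 < μ := Real.sqrt_pos.2 (by linarith)
  have hμne : μ ≠ 0 := ne_of_gt hμpos
  set u : ℝ → ℝ := fun x => f x + ft x with hudef
  set g : ℝ → ℝ := fun x => (lam + lami) * (ft x - f x) with hgdef
  have hu : ∀ x ∈ Icc (0 : ℝ) L, HasDerivWithinAt u (g x) (Icc (0 : ℝ) L) x := by
    intro x hx
    have := (hf x hx).add (hft x hx)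
    refine this.congr_deriv (Eq.symm ?_)
    simp only [hgdef]; ring
  have hg : ∀ x ∈ Icc (0 : ℝ) L,
      HasDerivWithinAt g (-(μ ^ 2) * u x) (Icc (0 : ℝ) L) x := by
    intro x hx
    have := ((hft x hx).sub (hf x hx)).const_mul (lam + lami)
    refine this.congr_deriv (Eq.symm ?_)
    simp only [hudef]
    linear_combination (-(f x + ft x)) * hμsq
  -- invariants
  set A : ℝ → ℝ := fun x => u x * Real.cos (μ * x) - (g x / μ) * Real.sin (μ * x) with hAdef
  set B : ℝ → ℝ := fun x => u x * Real.sin (μ * x) + (g x / μ) * Real.cos (μ * x) with hBdef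
  have hcos : ∀ x : ℝ, HasDerivAt (fun y => Real.cos (μ * y)) (-Real.sin (μ * x) * μ) x := by
    intro x
    exact (Real.hasDerivAt_cos (μ * x)).comp x (by simpa using (hasDerivAt_id x).const_mul μ)
  have hsin : ∀ x : ℝ, HasDerivAt (fun y => Real.sin (μ * y)) (Real.cos (μ * x) * μ) x := by
    intro x
    exact (Real.hasDerivAt_sin (μ * x)).comp x (by simpa using (hasDerivAt_id x).const_mul μ)
  have hA : ∀ x ∈ Icc (0 : ℝ) L, HasDerivWithinAt A 0 (Icc (0 : ℝ) L) x := by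
    intro x hx
    have h1 := ((hu x hx).mul (hcos x).hasDerivWithinAt).sub
      ((((hg x hx).div_const μ)).mul (hsin x).hasDerivWithinAt)
    refine h1.congr_deriv (Eq.symm ?_)
    field_simp
    ring
  have hB : ∀ x ∈ Icc (0 : ℝ) L, HasDerivWithinAt B 0 (Icc (0 : ℝ) L) x := by
    intro x hx
    have h1 := ((hu x hx).mul (hsin x).hasDerivWithinAt).add
      ((((hg x hx).div_const μ)).mul (hcos x).hasDerivWithinAt)
    refine h1.congr_deriv (Eq.symm ?_)
    field_simp
    ring
  have hA0 : A 0 = 0 := by simp [hAdef, hudef, hb0]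
  have hAconst := aux_const_of_deriv_zero hA
  have hBconst := aux_const_of_deriv_zero hB
  set c : ℝ := g 0 / μ with hcdef
  have hB0 : B 0 = c := by simp [hBdef, hcdef]
  have key : ∀ x ∈ Icc (0 : ℝ) L, u x = c * Real.sin (μ * x) := by
    intro x hx
    have h1 : A x = 0 := (hAconst x hx).trans hA0
    have h2 : B x = c := (hBconst x hx).trans hB0
    have hpy := Real.sin_sq_add_cos_sq (μ * x)
    simp only [hAdef, hBdef] at h1 h2
    linear_combination Real.sin (μ * x) * h2 + Real.cos (μ * x) * h1 - u x * hpy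
  have hc : c ≠ 0 := by
    intro hc0
    apply hne
    intro x hx
    have := key x hx
    rw [hc0] at this
    simpa [hudef] using this
  have huL : u L = 0 := hbL
  have hsinL : Real.sin (μ * L) = 0 := by
    have := key L ⟨le_of_lt hL, le_refl L⟩
    rw [huL] at this
    rcases mul_eq_zero.1 this.symm with h | h
    · exact absurd h hc
    · exact h
  obtain ⟨n, hn⟩ := Real.sin_eq_zero_iff.1 hsinL
  refine ⟨n, ?_, ?_⟩
  · rintro rfl
    simp only [Int.cast_zero, zero_mul] at hn
    nlinarith [hn, hμpos, hL]
  · have hLne : L ≠ 0 := ne_of_gt hL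
    have : μ = (n : ℝ) * Real.pi / L := by field_simp [← hn]; linarith
    have h2 : μ ^ 2 = (n : ℝ) ^ 2 * Real.pi ^ 2 / L ^ 2 := by
      rw [this]; field_simp
    rw [hμsq] at h2
    linarith [h2]
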